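/- arXiv:2511.15663 — 4 statements merged into one kernel-verified Lean document; each statement's English description precedes it below -/
import Mathlib

section
/- Let A be a set, μ an infinite cardinal, and let T, T' ⊆ A^{<μ} be trees (sets of sequences of length < μ closed under initial segments). Let φ : T → T' be an order embedding (injective, and s ⊊ t iff φ(s) ⊊ φ(t)), and suppose T is <κ-splitting with κ = μ regular, i.e., every node of T has fewer than μ immediate successors in T. Then the induced map f_φ on branches, f_φ(x) = ⋃_{α<μ} φ(x↾α), has image f_φ([T]) closed in A^μ with the bounded topology. -/
/-- Transfinite sequences over `A` of arbitrary ordinal length. -/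
structure BSeq (A : Type) : Type 1 where
  len : Ordinal.{0}
  val : ∀ β : Ordinal.{0}, β < len → A

namespace BSeq

/-- `s` is an initial segment of `t`. -/
def Prefix {A : Type} (s t : BSeq A) : Prop :=
  ∃ h : s.len ≤ t.len, ∀ β (hβ : β < s.len), s.val β hβ = t.val β (lt_of_lt_of_le hβ h)

/-- `s` is a proper initial segment of `t`. -/
def SPrefix {A : Type} (s t : BSeq A) : Prop := s.Prefix t ∧ s.len < t.len

/-- `s` and `t` are incompatible. -/
def Incomp {A : Type} (s t : BSeq A) : Prop := ¬ s.Prefix t ∧ ¬ t.Prefix s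

end BSeq

/-- Branches of length `μ` through `A`, i.e. elements of `A^μ`. -/
def Branch (A : Type) (μ : Ordinal.{0}) : Type 1 := ∀ β : Ordinal.{0}, β < μ → A

/-- The restriction `x ↾ α` of a branch. -/
def Branch.restrict {A : Type} {μ : Ordinal.{0}} (x : Branch A μ) (α : Ordinal.{0})
    (h : α ≤ μ) : BSeq A :=
  ⟨α, fun β hβ => x β (lt_of_lt_of_le hβ h)⟩

/-- `s` is an initial segment of the branch `x`. -/
def BSeq.PrefixB {A : Type} {μ : Ordinal.{0}} (s : BSeq A) (x : Branch A μ) : Prop :=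
  ∃ h : s.len ≤ μ, ∀ β (hβ : β < s.len), s.val β hβ = x β (lt_of_lt_of_le hβ h)

/-- The body `[T]` of a tree `T ⊆ A^{<μ}`: branches all of whose restrictions lie in `T`. -/
def body {A : Type} (T : Set (BSeq A)) (μ : Ordinal.{0}) : Set (Branch A μ) :=
  {x | ∀ α (hα : α < μ), x.restrict α hα.le ∈ T}

/-- The bounded topology on `A^μ`, generated by the cylinders `[s]` for `s ∈ A^{<μ}`. -/
instance branchTop (A : Type) (μ : Ordinal.{0}) : TopologicalSpace (Branch A μ) :=
  TopologicalSpace.generateFrom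
    {U : Set (Branch A μ) | ∃ s : BSeq A, s.len < μ ∧ U = {x | s.PrefixB x}}

section Helpers

variable {A : Type}

theorem BSeq.ext' {s t : BSeq A} (hlen : s.len = t.len)
    (hval : ∀ β (h : β < s.len) (h' : β < t.len), s.val β h = t.val β h') : s = t := by
  cases s with
  | mk l v =>
    cases t with
    | mk l' v' =>
      dsimp at hlen
      subst hlen
      simp only [BSeq.mk.injEq, heq_eq_eq, true_and]
      funext β h
      exact hval β h h

theorem BSeq.val_eq_of_eq {s t : BSeq A} (h : s = t) {α : Ordinal}
    (hs : α < s.len) (ht : α < t.len) : s.val α hs = t.val α ht := by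
  subst h; rfl

theorem BSeq.Prefix.refl (s : BSeq A) : s.Prefix s := ⟨le_rfl, fun _ _ => rfl⟩

theorem BSeq.Prefix.trans {s t u : BSeq A} (h1 : s.Prefix t) (h2 : t.Prefix u) :
    s.Prefix u := by
  obtain ⟨hl1, hv1⟩ := h1
  obtain ⟨hl2, hv2⟩ := h2
  exact ⟨hl1.trans hl2, fun β hβ => (hv1 β hβ).trans (hv2 β (lt_of_lt_of_le hβ hl1))⟩

theorem BSeq.Prefix.trans_prefixB {μ : Ordinal} {s t : BSeq A} {x : Branch A μ}
    (h1 : s.Prefix t) (h2 : t.PrefixB x) : s.PrefixB x := by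
  obtain ⟨hl1, hv1⟩ := h1
  obtain ⟨hl2, hv2⟩ := h2
  exact ⟨hl1.trans hl2, fun β hβ => (hv1 β hβ).trans (hv2 β (lt_of_lt_of_le hβ hl1))⟩

theorem BSeq.Prefix.eq_of_len {s t : BSeq A} (h : s.Prefix t) (hl : s.len = t.len) :
    s = t :=
  BSeq.ext' hl (fun β hβ _ => h.2 β hβ)

/-- Two initial segments of a common branch are comparable. -/
theorem BSeq.prefix_of_prefixB {μ : Ordinal} {s t : BSeq A} {y : Branch A μ}
    (hs : s.PrefixB y) (ht : t.PrefixB y) (hl : s.len ≤ t.len) : s.Prefix t := by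
  obtain ⟨h1, v1⟩ := hs
  obtain ⟨h2, v2⟩ := ht
  exact ⟨hl, fun β hβ => (v1 β hβ).trans (v2 β (lt_of_lt_of_le hβ hl)).symm⟩

theorem Branch.restrict_prefix {μ : Ordinal} (x : Branch A μ) {α α' : Ordinal}
    (h : α ≤ α') (h' : α' ≤ μ) :
    (x.restrict α (h.trans h')).Prefix (x.restrict α' h') := ⟨h, fun _ _ => rfl⟩

theorem Branch.restrict_prefixB {μ : Ordinal} (x : Branch A μ) {α : Ordinal} (h : α ≤ μ) :
    (x.restrict α h).PrefixB x := ⟨h, fun _ _ => rfl⟩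

/-- Truncation of a transfinite sequence. -/
def BSeq.cut (t : BSeq A) (α : Ordinal) (h : α ≤ t.len) : BSeq A :=
  ⟨α, fun β hβ => t.val β (lt_of_lt_of_le hβ h)⟩

theorem BSeq.cut_prefix (t : BSeq A) {α : Ordinal} (h : α ≤ t.len) :
    (t.cut α h).Prefix t := ⟨h, fun _ _ => rfl⟩

/-- The empty sequence. -/
def BSeq.empty (A : Type) : BSeq A := ⟨0, fun β h => absurd h (not_lt_zero (a := β))⟩

theorem BSeq.eq_empty {t : BSeq A} (h : t.len = 0) : t = BSeq.empty A :=
  BSeq.ext' h (fun β _ h' => absurd h' (not_lt_zero (a := β)))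

theorem Ordinal.lt_add_one' (o : Ordinal) : o < o + 1 := by
  rw [Ordinal.add_one_eq_succ]; exact Order.lt_succ o

end Helpers

/-- If `φ : T → T'` is an order embedding between trees `T, T' ⊆ A^{<μ}`, `μ` regular,
and `T` is `<μ`-splitting, then the image of the induced map on branches,
`f_φ([T]) = {y | ∃ x ∈ [T], ∀ α < μ, φ(x↾α) ⊑ y}`, is closed in `A^μ` with the
bounded topology. -/
theorem image_of_branch_map_is_closed {A : Type} (μ : Cardinal.{0}) (hreg : μ.IsRegular)
    (T T' : Set (BSeq A))
    (hTlen : ∀ s ∈ T, s.len < μ.ord) (hT'len : ∀ s ∈ T', s.len < μ.ord)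
    (hTtree : ∀ s ∈ T, ∀ t : BSeq A, t.Prefix s → t ∈ T)
    (hT'tree : ∀ s ∈ T', ∀ t : BSeq A, t.Prefix s → t ∈ T')
    (φ : BSeq A → BSeq A)
    (hrange : ∀ s ∈ T, φ s ∈ T')
    (hinj : ∀ s ∈ T, ∀ t ∈ T, φ s = φ t → s = t)
    (hemb : ∀ s ∈ T, ∀ t ∈ T, (BSeq.SPrefix s t ↔ BSeq.SPrefix (φ s) (φ t)))
    (hsplit : ∀ s ∈ T,
      Cardinal.mk {t : BSeq A // t ∈ T ∧ BSeq.Prefix s t ∧ t.len = s.len + 1}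
        < Cardinal.lift.{1} μ) :
    IsClosed {y : Branch A μ.ord |
      ∃ x ∈ body T μ.ord, ∀ α (hα : α < μ.ord),
        BSeq.PrefixB (φ (Branch.restrict x α hα.le)) y} := by
  set C : Set (Branch A μ.ord) := {y : Branch A μ.ord |
      ∃ x ∈ body T μ.ord, ∀ α (hα : α < μ.ord),
        BSeq.PrefixB (φ (Branch.restrict x α hα.le)) y} with hCdef
  have hlim : Order.IsSuccLimit (Cardinal.ord μ) := Cardinal.isSuccLimit_ord hreg.aleph0_le
  have hμpos : (0 : Ordinal) < μ.ord := hlim.pos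
  have succ_lt : ∀ {a : Ordinal}, a < μ.ord → a + 1 < μ.ord := by
    intro a ha
    rw [Ordinal.add_one_eq_succ]
    exact hlim.succ_lt ha
  rw [← isOpen_compl_iff, isOpen_iff_forall_mem_open]
  intro y hy
  by_cases Hy : ∀ β (hβ : β < μ.ord), ∃ z, z ∈ C ∧ (y.restrict β hβ.le).PrefixB z
  · -- `y` satisfies the closure condition; we show `y ∈ C`, contradicting `hy`.
    exfalso
    apply hy
    -- the set of nodes of `T` whose image is an initial segment of `y`
    set S : Set (BSeq A) := {s | s ∈ T ∧ (φ s).PrefixB y} with hSdef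
    -- `S` is a chain
    have hSchain : ∀ s ∈ S, ∀ t ∈ S, s.Prefix t ∨ t.Prefix s := by
      have key : ∀ s ∈ S, ∀ t ∈ S, (φ s).len ≤ (φ t).len → s.Prefix t := by
        intro s hs t ht hl
        rcases eq_or_lt_of_le hl with heq | hlt
        · have : φ s = φ t := (BSeq.prefix_of_prefixB hs.2 ht.2 hl).eq_of_len heq
          obtain rfl := hinj s hs.1 t ht.1 this
          exact BSeq.Prefix.refl s
        · have : BSeq.SPrefix (φ s) (φ t) := ⟨BSeq.prefix_of_prefixB hs.2 ht.2 hl, hlt⟩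
          exact ((hemb s hs.1 t ht.1).mpr this).1
      intro s hs t ht
      rcases le_total ((φ s).len) ((φ t).len) with h | h
      · exact Or.inl (key s hs t ht h)
      · exact Or.inr (key t ht s hs h)
    have hSlen : ∀ s ∈ S, ∀ t ∈ S, s.len ≤ t.len → s.Prefix t := by
      intro s hs t ht hl
      rcases hSchain s hs t ht with h | h
      · exact h
      · obtain rfl := h.eq_of_len (le_antisymm h.1 hl)
        exact BSeq.Prefix.refl t
    have hSuniq : ∀ s ∈ S, ∀ t ∈ S, s.len = t.len → s = t := by
      intro s hs t ht hl
      exact (hSlen s hs t ht hl.le).eq_of_len hl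
    -- `T` contains the empty sequence
    have hT0 : BSeq.empty A ∈ T := by
      obtain ⟨z, hzC, _⟩ := Hy 0 hμpos
      obtain ⟨x, hxT, _⟩ := hzC
      have := hxT 0 hμpos
      rwa [BSeq.eq_empty (rfl : (x.restrict 0 hμpos.le).len = 0)] at this
    set β₀ : Ordinal := (φ (BSeq.empty A)).len with hβ₀def
    have hβ₀ : β₀ < μ.ord := hT'len _ (hrange _ hT0)
    by_cases hbd : ∃ δ, δ < μ.ord ∧ ∀ s ∈ S, s.len ≤ δ
    · -- bounded case: contradiction via the splitting hypothesis
      exfalso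
      obtain ⟨δ, hδ, hbd⟩ := hbd
      set Full : Ordinal → Set (BSeq A) :=
        fun γ => {t | t ∈ T ∧ t.len = γ ∧ ∀ α (hα : α < t.len), t.cut α hα.le ∈ S}
        with hFulldef
      set ι : Type 1 := Σ γ : (Set.Iio (δ + 2) : Set Ordinal), ↥(Full γ.1) with hιdef
      set f : ι → Ordinal.{0} := fun i => (φ i.2.1).len with hfdef
      -- the covering claim
      have hcov : ∀ β, β < μ.ord → ∃ i : ι, β < f i := by
        intro β hβ
        set β₂ := max β β₀ with hβ₂def
        have hβ₂ : β₂ < μ.ord := max_lt hβ hβ₀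
        have hβ₂1 : β₂ + 1 < μ.ord := succ_lt hβ₂
        obtain ⟨z, hzC, hpz⟩ := Hy (β₂ + 1) hβ₂1
        obtain ⟨x, hxT, hfx⟩ := hzC
        have hagree : ∀ s : BSeq A, s.PrefixB z → s.len ≤ β₂ → s.PrefixB y := by
          rintro s ⟨hl, hv⟩ hlen
          refine ⟨hlen.trans hβ₂.le, fun γ hγ => ?_⟩
          have h1 : γ < β₂ + 1 :=
            lt_of_le_of_lt (le_of_lt (lt_of_lt_of_le hγ hlen)) (Ordinal.lt_add_one' β₂)
          exact (hv γ hγ).trans (hpz.2 γ h1).symm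
        -- φ is strictly increasing in lengths along x
        have hmono : ∀ α α' (hα : α < α') (h' : α' < μ.ord),
            (φ (x.restrict α (le_of_lt (hα.trans h')))).len <
              (φ (x.restrict α' h'.le)).len := by
          intro α α' hα h'
          have hsp : BSeq.SPrefix (x.restrict α (le_of_lt (hα.trans h')))
              (x.restrict α' h'.le) := ⟨Branch.restrict_prefix x hα.le h'.le, hα⟩
          exact ((hemb _ (hxT α (hα.trans h')) _ (hxT α' h')).mp hsp).2
        have hle : ∀ α (hα : α < μ.ord), α ≤ (φ (x.restrict α hα.le)).len := by
          intro α
          induction α using Ordinal.induction with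
          | h α IH =>
            intro hα
            by_contra hcon2
            push_neg at hcon2
            have h1 := IH _ hcon2 (hcon2.trans hα)
            have h2 := hmono _ _ hcon2 hα
            exact absurd (h1.trans_lt h2) (lt_irrefl _)
        set N : Set Ordinal :=
          {α | ∃ hα : α < μ.ord, β₂ < (φ (x.restrict α hα.le)).len} with hNdef
        have hNne : N.Nonempty :=
          ⟨β₂ + 1, hβ₂1, lt_of_lt_of_le (Ordinal.lt_add_one' β₂) (hle (β₂ + 1) hβ₂1)⟩
        set n := sInf N with hndef
        have hnN : n ∈ N := csInf_mem hNne
        obtain ⟨hnμ, hnℓ⟩ := hnN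
        have hmin : ∀ α, α < n → ∀ hα : α < μ.ord,
            (φ (x.restrict α hα.le)).len ≤ β₂ := by
          intro α hα hαμ
          by_contra h
          push_neg at h
          exact absurd (csInf_le' (show α ∈ N from ⟨hαμ, h⟩)) (not_le.mpr hα)
        have h0N : (0 : Ordinal) ∉ N := by
          rintro ⟨h1, h2⟩
          rw [BSeq.eq_empty (rfl : (x.restrict 0 h1.le).len = 0)] at h2
          exact absurd h2 (not_lt.mpr (le_max_right β β₀))
        have hn0 : 0 < n := by
          rcases eq_zero_or_pos n with h0 | h
          · exact absurd (h0 ▸ (⟨hnμ, hnℓ⟩ : n ∈ N)) h0N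
          · exact h
        have hproper : ∀ α, α < n → ∀ hα : α < μ.ord, x.restrict α hα.le ∈ S := by
          intro α hαn hαμ
          exact ⟨hxT α hαμ, hagree _ (hfx α hαμ) (hmin α hαn hαμ)⟩
        have hnδ : n ≤ δ + 1 := by
          by_contra h
          push_neg at h
          have hδ1μ : δ + 1 < μ.ord := succ_lt hδ
          have h2 := hbd _ (hproper (δ + 1) h hδ1μ)
          exact absurd h2 (not_le.mpr (Ordinal.lt_add_one' δ))
        have hn2 : n < δ + 2 := by
          refine lt_of_le_of_lt hnδ ?_
          have : δ + 1 < (δ + 1) + 1 := Ordinal.lt_add_one' (δ + 1)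
          rwa [add_assoc, one_add_one_eq_two] at this
        have htfull : x.restrict n hnμ.le ∈ Full n := by
          refine ⟨hxT n hnμ, rfl, ?_⟩
          intro α hα
          exact hproper α hα (lt_of_lt_of_le hα hnμ.le)
        exact ⟨⟨⟨n, hn2⟩, ⟨x.restrict n hnμ.le, htfull⟩⟩,
          lt_of_le_of_lt (le_max_left β β₀) hnℓ⟩
      -- cardinality of the index type
      have haleph1 : (1 : Cardinal.{1}) < Cardinal.lift.{1} μ :=
        lt_of_lt_of_le Cardinal.one_lt_aleph0 (Cardinal.aleph0_le_lift.mpr hreg.1)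
      have hreglift : (Cardinal.lift.{1} μ).IsRegular := by
        constructor
        · exact Cardinal.aleph0_le_lift.mpr hreg.1
        · rw [← Cardinal.lift_ord, ← Ordinal.lift_cof, hreg.cof_eq]
      have hcard : Cardinal.mk ι < Cardinal.lift.{1} μ := by
        rw [hιdef, Cardinal.mk_sigma]
        refine Cardinal.sum_lt_lift_of_isRegular.{1, 0} hreglift ?_ ?_
        · rw [Cardinal.lift_id', Ordinal.mk_Iio_ordinal]
          rw [Cardinal.lift_lt]
          refine Cardinal.lt_ord.mp ?_
          have h1 : δ + 1 < μ.ord := succ_lt hδ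
          have h2 : (δ + 1) + 1 < μ.ord := succ_lt h1
          rwa [add_assoc, one_add_one_eq_two] at h2
        · rintro ⟨γ, hγ⟩
          rcases Ordinal.zero_or_succ_or_isSuccLimit γ with h0 | ⟨γ₀, hγ₀⟩ | hlimγ
          · refine lt_of_le_of_lt (Cardinal.mk_le_one_iff_set_subsingleton.mpr ?_) haleph1
            intro t ht t' ht'
            exact (BSeq.eq_empty (ht.2.1.trans h0)).trans
              (BSeq.eq_empty (ht'.2.1.trans h0)).symm
          · by_cases hex : ∃ s, s ∈ S ∧ s.len = γ₀
            · obtain ⟨s, hsS, hslen⟩ := hex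
              have hsub : ∀ t : BSeq A, t ∈ Full γ →
                  t ∈ T ∧ s.Prefix t ∧ t.len = s.len + 1 := by
                rintro t ⟨htT, htlen, htS⟩
                have hγ0t : γ₀ < t.len := by
                  rw [htlen, ← hγ₀]; exact Order.lt_succ γ₀
                have hcutS : t.cut γ₀ hγ0t.le ∈ S := htS γ₀ hγ0t
                have hcuteq : t.cut γ₀ hγ0t.le = s :=
                  hSuniq _ hcutS _ hsS (by rw [hslen]; rfl)
                refine ⟨htT, ?_, ?_⟩
                · rw [← hcuteq]; exact t.cut_prefix hγ0t.le
                · rw [htlen, ← hγ₀, hslen, Ordinal.add_one_eq_succ]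
              refine lt_of_le_of_lt (Cardinal.mk_le_of_injective
                (f := fun t : ↥(Full γ) =>
                  (⟨t.1, hsub t.1 t.2⟩ :
                    {t : BSeq A // t ∈ T ∧ s.Prefix t ∧ t.len = s.len + 1})) ?_)
                (hsplit s hsS.1)
              rintro ⟨a, ha⟩ ⟨b, hb⟩ hab
              simpa using congrArg Subtype.val hab
            · have hempty : Full γ ⊆ (∅ : Set (BSeq A)) := by
                rintro t ⟨htT, htlen, htS⟩
                have hγ0t : γ₀ < t.len := by
                  rw [htlen, ← hγ₀]; exact Order.lt_succ γ₀
                exact absurd ⟨t.cut γ₀ hγ0t.le, htS γ₀ hγ0t, rfl⟩ hex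
              refine lt_of_le_of_lt (Cardinal.mk_le_mk_of_subset hempty) ?_
              rw [Cardinal.mk_emptyCollection]
              exact lt_trans zero_lt_one haleph1
          · refine lt_of_le_of_lt (Cardinal.mk_le_one_iff_set_subsingleton.mpr ?_) haleph1
            rintro t ⟨htT, htlen, htS⟩ t' ⟨htT', htlen', htS'⟩
            have htlenγ : t.len = γ := htlen
            have htlenγ' : t'.len = γ := htlen'
            refine BSeq.ext' (htlen.trans htlen'.symm) ?_
            intro α hα hα'
            have hα1 : α + 1 < t.len := by
              rw [htlenγ, Ordinal.add_one_eq_succ]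
              refine hlimγ.succ_lt ?_
              rw [← htlenγ]; exact hα
            have hα1' : α + 1 < t'.len := by
              rw [htlenγ', Ordinal.add_one_eq_succ]
              refine hlimγ.succ_lt ?_
              rw [← htlenγ']; exact hα'
            have heq : t.cut (α + 1) hα1.le = t'.cut (α + 1) hα1'.le :=
              hSuniq _ (htS (α + 1) hα1) _ (htS' (α + 1) hα1') rfl
            exact BSeq.val_eq_of_eq heq (Ordinal.lt_add_one' α) (Ordinal.lt_add_one' α)
      -- the contradiction via regularity
      set F : ι → Ordinal.{1} := fun i => Ordinal.lift.{1,0} (f i) with hFdef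
      have hFlt : ∀ i, F i < Ordinal.lift.{1,0} μ.ord := by
        intro i
        exact Ordinal.lift_lt.{1,0}.mpr (hT'len _ (hrange _ i.2.2.1))
      have hsup : iSup F < Ordinal.lift.{1,0} μ.ord := by
        refine Ordinal.iSup_lt_ord_lift.{1,1} ?_ hFlt
        rwa [← Ordinal.lift_cof, hreg.cof_eq, Cardinal.lift_id]
      obtain ⟨σ, hσ, hσeq⟩ := Ordinal.lt_lift_iff.{0,1}.mp hsup
      obtain ⟨i, hi⟩ := hcov σ hσ
      have hFi : F i ≤ iSup F := Ordinal.le_iSup F i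
      rw [← hσeq] at hFi
      exact absurd (Ordinal.lift_lt.{1,0}.mpr hi) (not_lt.mpr hFi)
    · -- unbounded case: construct a branch witnessing `y ∈ C`
      push_neg at hbd
      have hch : ∀ γ, γ < μ.ord → ∃ s, s ∈ S ∧ γ < s.len := by
        intro γ hγ
        obtain ⟨s, hs, hlen⟩ := hbd γ hγ
        exact ⟨s, hs, hlen⟩
      set x : Branch A μ.ord :=
        fun γ hγ => ((hch γ hγ).choose).val γ (hch γ hγ).choose_spec.2 with hxdef
      have xval : ∀ γ (hγ : γ < μ.ord) (s : BSeq A) (hs : s ∈ S) (hγs : γ < s.len),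
          x γ hγ = s.val γ hγs := by
        intro γ hγ s hs hγs
        have h1 : x γ hγ = ((hch γ hγ).choose).val γ (hch γ hγ).choose_spec.2 := rfl
        rw [h1]
        rcases le_total ((hch γ hγ).choose.len) s.len with h | h
        · exact (hSlen _ (hch γ hγ).choose_spec.1 _ hs h).2 γ (hch γ hγ).choose_spec.2
        · exact ((hSlen _ hs _ (hch γ hγ).choose_spec.1 h).2 γ hγs).symm
      have hrS : ∀ α (hα : α < μ.ord), x.restrict α hα.le ∈ S := by
        intro α hα
        obtain ⟨s, hs, hαs⟩ := hch α hα
        have hpre : (x.restrict α hα.le).Prefix s := by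
          refine ⟨hαs.le, fun γ hγ => ?_⟩
          exact xval γ (lt_of_lt_of_le hγ hα.le) s hs (lt_of_lt_of_le hγ hαs.le)
        have hmemT : x.restrict α hα.le ∈ T := hTtree s hs.1 _ hpre
        have hsp : BSeq.SPrefix (x.restrict α hα.le) s := ⟨hpre, hαs⟩
        have hsp' : BSeq.SPrefix (φ (x.restrict α hα.le)) (φ s) :=
          (hemb _ hmemT _ hs.1).mp hsp
        exact ⟨hmemT, hsp'.1.trans_prefixB hs.2⟩
      exact ⟨x, fun α hα => (hrS α hα).1, fun α hα => (hrS α hα).2⟩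
  · -- `y` has a basic neighborhood disjoint from `C`
    push_neg at Hy
    obtain ⟨β, hβ, hd⟩ := Hy
    refine ⟨{x | (y.restrict β hβ.le).PrefixB x}, ?_, ?_, ?_⟩
    · intro z hz hzC
      exact hd z hzC hz
    · exact TopologicalSpace.GenerateOpen.basic _ ⟨y.restrict β hβ.le, hβ, rfl⟩
    · exact Branch.restrict_prefixB y hβ.le
end

section
/- Let I be a set with |I| ≤ 2^κ for an infinite cardinal κ with κ^{<κ} = κ, and for each i ∈ I let X_i be a topological space with a dense subset of cardinality at most κ. Then the product ∏_{i∈I} X_i, endowed with the <κ-box topology (basic open sets are products ∏ U_i where U_i ⊆ X_i is open and U_i ≠ X_i for fewer than κ-many indices i), has a dense subset of cardinality at most κ. -/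
universe u

theorem dense_generateFrom_of_basis' {α : Type*} {B : Set (Set α)} {D : Set α}
    (huniv : Set.univ ∈ B)
    (hinter : ∀ S ∈ B, ∀ T ∈ B, S ∩ T ∈ B)
    (h : ∀ S ∈ B, S.Nonempty → (S ∩ D).Nonempty) :
    @Dense α (TopologicalSpace.generateFrom B) D := by
  letI : TopologicalSpace α := TopologicalSpace.generateFrom B
  have hb : TopologicalSpace.IsTopologicalBasis B :=
    ⟨fun t₁ h₁ t₂ h₂ x hx => ⟨t₁ ∩ t₂, hinter _ h₁ _ h₂, hx, Set.Subset.rfl⟩,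
     subset_antisymm (Set.subset_univ _) (fun x _ => ⟨Set.univ, huniv, trivial⟩), rfl⟩
  refine hb.dense_iff.mpr (fun o ho hne => ?_)
  obtain ⟨x, hx1, hx2⟩ := h o ho hne
  exact ⟨x, hx1, hx2⟩

theorem exists_surjective_of_mk_le' {α β : Type u} [Nonempty α]
    (h : Cardinal.mk α ≤ Cardinal.mk β) : ∃ f : β → α, Function.Surjective f := by
  obtain ⟨e⟩ := (Cardinal.le_def _ _).mp h
  exact ⟨Function.invFun e, Function.invFun_surjective e.injective⟩

theorem exists_Iio_card' (κ : Cardinal.{u}) {μ : Cardinal.{u}} (hμ : μ < κ) :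
    ∃ b : κ.ord.ToType, μ ≤ Cardinal.mk (Set.Iio b) := by
  haveI hwo : IsWellOrder κ.ord.ToType ((· < ·) : κ.ord.ToType → κ.ord.ToType → Prop) :=
    isWellOrder_lt
  obtain ⟨b, hb⟩ := Ordinal.typein_surj ((· < ·) : κ.ord.ToType → κ.ord.ToType → Prop)
    (show μ.ord < _ by rw [Ordinal.type_toType]; exact Cardinal.ord_lt_ord.mpr hμ)
  have h2 : Cardinal.mk {y // y < b} = μ := by
    exact (congrArg Ordinal.card hb).trans (Cardinal.card_ord μ)
  exact ⟨b, le_of_eq h2.symm⟩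

theorem mk_sigma_le_of_le' {ι : Type u} {F : ι → Type u} {c : Cardinal.{u}}
    (hc : Cardinal.aleph0 ≤ c) (hι : Cardinal.mk ι ≤ c) (h : ∀ i, Cardinal.mk (F i) ≤ c) :
    Cardinal.mk (Σ i, F i) ≤ c := by
  calc Cardinal.mk (Σ i, F i) = Cardinal.sum (fun i => Cardinal.mk (F i)) := Cardinal.mk_sigma _
    _ ≤ Cardinal.sum (fun _ : ι => c) := Cardinal.sum_le_sum _ _ h
    _ = Cardinal.mk ι * c := Cardinal.sum_const' _ _
    _ ≤ c * c := mul_le_mul_left hι c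
    _ = c := Cardinal.mul_eq_self hc

/-- The parameter space for the dense set of the `<κ`-box product. -/
def HMP.Param (κ : Cardinal.{u}) : Type u :=
  Σ b : κ.ord.ToType, Σ c : κ.ord.ToType,
    (Set.Iio b → κ.ord.ToType) × (Set.Iio c → (Set.Iio b → Prop)) × (Set.Iio c → κ.ord.ToType)

open scoped Classical in
/-- The point of the box product coded by a parameter. -/
noncomputable def HMP.point {κ : Cardinal.{u}} {I : Type u} {X : I → Type u}
    [Nonempty κ.ord.ToType] (f : I → Set κ.ord.ToType) (g : ∀ i, κ.ord.ToType → X i)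
    (p : HMP.Param κ) (i : I) : X i :=
  if h : ∃ j, p.2.2.2.1 j = fun j' : Set.Iio p.1 => p.2.2.1 j' ∈ f i
  then g i (p.2.2.2.2 h.choose) else g i (Classical.arbitrary _)

theorem HMP.point_eq {κ : Cardinal.{u}} {I : Type u} {X : I → Type u}
    [Nonempty κ.ord.ToType] (f : I → Set κ.ord.ToType) (g : ∀ i, κ.ord.ToType → X i)
    (b c : κ.ord.ToType) (θ : Set.Iio b → κ.ord.ToType)
    (e : Set.Iio c → (Set.Iio b → Prop)) (u : Set.Iio c → κ.ord.ToType) (i : I)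
    (hex : ∃ j, e j = fun j' : Set.Iio b => θ j' ∈ f i) :
    HMP.point f g ⟨b, c, (θ, e, u)⟩ i = g i (u hex.choose) := dif_pos hex

/-- Generalized Hewitt–Marczewski–Pondiczery theorem: if `κ^{<κ} = κ`, `|I| ≤ 2^κ`
and every `X i` has a dense subset of size at most `κ`, then the product `∀ i, X i`
with the `<κ`-box topology has a dense subset of size at most `κ`. -/
theorem dense_subset_of_box_product (κ : Cardinal.{u}) (hκ : Cardinal.aleph0 ≤ κ)
    (hκκ : κ ^< κ = κ) {I : Type u} (hI : Cardinal.mk I ≤ 2 ^ κ)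
    (X : I → Type u) [∀ i, TopologicalSpace (X i)]
    (hdense : ∀ i, ∃ D : Set (X i), Cardinal.mk D ≤ κ ∧ Dense D) :
    ∃ D : Set (∀ i, X i), Cardinal.mk D ≤ κ ∧
      @Dense _ (TopologicalSpace.generateFrom
        {S : Set (∀ i, X i) | ∃ U : ∀ i, Set (X i), (∀ i, IsOpen (U i)) ∧
          Cardinal.mk {i : I // U i ≠ Set.univ} < κ ∧ S = Set.pi Set.univ U}) D := by
  classical
  by_cases hne : Nonempty (∀ i, X i)
  case neg =>
    refine ⟨∅, by simp, fun x => absurd ⟨x⟩ hne⟩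
  obtain ⟨x₀⟩ := hne
  have hXne : ∀ i, Nonempty (X i) := fun i => ⟨x₀ i⟩
  have hκ0 : κ ≠ 0 := (Cardinal.aleph0_pos.trans_le hκ).ne'
  have hO : Cardinal.mk κ.ord.ToType = κ := by rw [Cardinal.mk_toType, Cardinal.card_ord]
  haveI hOne : Nonempty κ.ord.ToType := Ordinal.toType_nonempty_iff_ne_zero.mpr
    (fun h => hκ0 (by simpa using congrArg Ordinal.card h))
  have h2κ : (2 : Cardinal) ≤ κ := by exact_mod_cast le_trans (Cardinal.nat_lt_aleph0 2).le hκ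
  have hpow : ∀ {ν : Cardinal.{u}}, ν < κ → κ ^ ν ≤ κ := fun hν => le_trans (Cardinal.le_powerlt κ hν) (le_of_eq hκκ)
  -- embedding of `I` into sets of coordinates
  have hI' : Cardinal.mk I ≤ Cardinal.mk (Set κ.ord.ToType) := by
    rw [Cardinal.mk_set, hO]; exact hI
  obtain ⟨f⟩ := (Cardinal.le_def _ _).mp hI'
  -- functions with dense range
  have hg : ∀ i, ∃ g : κ.ord.ToType → X i,
      ∀ U : Set (X i), IsOpen U → U.Nonempty → ∃ a, g a ∈ U := by
    intro i
    obtain ⟨D, hDκ, hDd⟩ := hdense i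
    haveI : Nonempty (X i) := hXne i
    haveI hDne : Nonempty D := hDd.nonempty.to_subtype
    obtain ⟨σ, hσ⟩ := exists_surjective_of_mk_le' (α := D) (β := κ.ord.ToType)
      (by rw [hO]; exact hDκ)
    refine ⟨fun a => (σ a : X i), fun U hU hUne => ?_⟩
    obtain ⟨d, hdU, hdD⟩ := hDd.inter_open_nonempty U hU hUne
    obtain ⟨a, ha⟩ := hσ ⟨d, hdD⟩
    exact ⟨a, by show ((σ a : D) : X i) ∈ U; rw [ha]; exact hdU⟩
  choose g hg using hg
  refine ⟨Set.range (HMP.point (fun i => f i) g), ?_, ?_⟩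
  · -- cardinality bound
    refine le_trans Cardinal.mk_range_le ?_
    refine mk_sigma_le_of_le' hκ (le_of_eq hO) (fun b => ?_)
    refine mk_sigma_le_of_le' hκ (le_of_eq hO) (fun c => ?_)
    have hμ : Cardinal.mk (Set.Iio b) < κ := Cardinal.mk_Iio_ord_toType b
    have hν : Cardinal.mk (Set.Iio c) < κ := Cardinal.mk_Iio_ord_toType c
    have h1 : Cardinal.mk (Set.Iio b → κ.ord.ToType) ≤ κ := by
      rw [Cardinal.mk_arrow, Cardinal.lift_id, Cardinal.lift_id, hO]; exact hpow hμ
    have h3 : Cardinal.mk (Set.Iio c → κ.ord.ToType) ≤ κ := by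
      rw [Cardinal.mk_arrow, Cardinal.lift_id, Cardinal.lift_id, hO]; exact hpow hν
    have h2 : Cardinal.mk (Set.Iio c → (Set.Iio b → Prop)) ≤ κ := by
      simp only [Cardinal.mk_arrow, Cardinal.mk_Prop, Cardinal.lift_two, Cardinal.lift_id,
        Cardinal.lift_uzero]
      rw [← Cardinal.power_mul]
      calc (2 : Cardinal) ^ (Cardinal.mk (Set.Iio b) * Cardinal.mk (Set.Iio c)) ≤
          κ ^ (Cardinal.mk (Set.Iio b) * Cardinal.mk (Set.Iio c)) :=
            Cardinal.power_le_power_right h2κ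
        _ ≤ κ := hpow (Cardinal.mul_lt_of_lt hκ hμ hν)
    calc Cardinal.mk ((Set.Iio b → κ.ord.ToType) × (Set.Iio c → (Set.Iio b → Prop)) ×
          (Set.Iio c → κ.ord.ToType))
        = Cardinal.mk (Set.Iio b → κ.ord.ToType) *
          (Cardinal.mk (Set.Iio c → (Set.Iio b → Prop)) *
           Cardinal.mk (Set.Iio c → κ.ord.ToType)) := by
          rw [Cardinal.mk_prod, Cardinal.mk_prod]; simp [Cardinal.lift_id]
      _ ≤ κ * (κ * κ) := mul_le_mul' h1 (mul_le_mul' h2 h3)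
      _ = κ := by rw [Cardinal.mul_eq_self hκ, Cardinal.mul_eq_self hκ]
  · -- density
    refine dense_generateFrom_of_basis' ?_ ?_ ?_
    · refine ⟨fun _ => Set.univ, fun i => isOpen_univ, ?_, (Set.pi_univ _).symm⟩
      haveI : IsEmpty {i : I // (Set.univ : Set (X i)) ≠ Set.univ} := ⟨fun x => x.2 rfl⟩
      rw [Cardinal.mk_eq_zero]
      exact lt_of_lt_of_le Cardinal.aleph0_pos hκ
    · rintro S ⟨U, hUo, hUκ, rfl⟩ T ⟨V, hVo, hVκ, rfl⟩
      refine ⟨fun i => U i ∩ V i, fun i => (hUo i).inter (hVo i), ?_, (Set.pi_inter_distrib).symm⟩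
      have hsub : {i : I | U i ∩ V i ≠ Set.univ} ⊆ {i | U i ≠ Set.univ} ∪ {i | V i ≠ Set.univ} := by
        intro i hi
        by_contra hc
        simp only [Set.mem_union, Set.mem_setOf_eq, not_or, not_not] at hc
        exact hi (by rw [hc.1, hc.2, Set.univ_inter])
      exact lt_of_le_of_lt
        ((Cardinal.mk_le_mk_of_subset hsub).trans (Cardinal.mk_union_le _ _))
        (Cardinal.add_lt_of_lt hκ hUκ hVκ)
    · rintro S ⟨U, hUo, hUκ, rfl⟩ ⟨y, hy⟩
      by_cases hT : Nonempty {i : I // U i ≠ Set.univ}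
      case neg =>
        have hUuniv : ∀ i, U i = Set.univ := fun i => not_not.mp (fun h => hT ⟨⟨i, h⟩⟩)
        refine ⟨HMP.point (fun i => f i) g
          ⟨Classical.arbitrary _, Classical.arbitrary _,
            (fun _ => Classical.arbitrary _, fun _ _ => True, fun _ => Classical.arbitrary _)⟩,
          fun i _ => by rw [hUuniv i]; trivial, Set.mem_range_self _⟩
      -- main case
      have ha : ∀ i, ∃ o : κ.ord.ToType, g i o ∈ U i :=
        fun i => hg i (U i) (hUo i) ⟨y i, hy i (Set.mem_univ i)⟩
      choose a ha using ha
      have hsep : ∀ s t : I, f s ≠ f t → ∃ o : κ.ord.ToType, ¬(o ∈ f s ↔ o ∈ f t) := by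
        intro s t hst
        by_contra hc
        simp only [not_exists, not_not] at hc
        exact hst (Set.ext fun o => hc o)
      let γ : I → I → κ.ord.ToType := fun s t =>
        if h : f s ≠ f t then (hsep s t h).choose else Classical.arbitrary _
      set T := {i : I // U i ≠ Set.univ} with hTdef
      haveI := hT
      have hTT : Cardinal.mk (T × T) < κ := by
        rw [Cardinal.mk_prod, Cardinal.lift_id]
        exact Cardinal.mul_lt_of_lt hκ hUκ hUκ
      obtain ⟨b, hb⟩ := exists_Iio_card' κ hTT
      obtain ⟨σ, hσ⟩ := exists_surjective_of_mk_le' (α := T × T) (β := Set.Iio b) hb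
      obtain ⟨c, hc⟩ := exists_Iio_card' κ hUκ
      obtain ⟨σ', hσ'⟩ := exists_surjective_of_mk_le' (α := T) (β := Set.Iio c) hc
      let θ : Set.Iio b → κ.ord.ToType := fun j => γ ((σ j).1 : T).1 ((σ j).2 : T).1
      let tr : I → (Set.Iio b → Prop) := fun i j' => θ j' ∈ f i
      let e : Set.Iio c → (Set.Iio b → Prop) := fun j => tr (σ' j).1
      let u : Set.Iio c → κ.ord.ToType := fun j => a (σ' j).1
      -- trace injectivity on T
      have htr : ∀ s t : T, tr s.1 = tr t.1 → s = t := by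
        intro s t h
        by_contra hst
        have hff : f s.1 ≠ f t.1 := fun h' => hst (Subtype.ext (f.injective h'))
        obtain ⟨j, hj⟩ := hσ (s, t)
        have hθ : θ j = γ s.1 t.1 := by show γ ((σ j).1 : T).1 ((σ j).2 : T).1 = _; rw [hj]
        have hγeq : γ s.1 t.1 = (hsep s.1 t.1 hff).choose := dif_pos hff
        apply (hsep s.1 t.1 hff).choose_spec
        rw [← hγeq, ← hθ]
        exact iff_of_eq (congrFun h j)
      refine ⟨HMP.point (fun i => f i) g ⟨b, c, (θ, e, u)⟩, fun i _ => ?_, Set.mem_range_self _⟩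
      by_cases hiT : U i ≠ Set.univ
      · have hex : ∃ j : Set.Iio c, e j = fun j' : Set.Iio b => θ j' ∈ f i := by
          obtain ⟨j, hj⟩ := hσ' ⟨i, hiT⟩
          exact ⟨j, by show tr (σ' j).1 = tr i; rw [hj]⟩
        rw [HMP.point_eq (fun i => f i) g b c θ e u i hex]
        have heq : σ' hex.choose = ⟨i, hiT⟩ := htr _ _ hex.choose_spec
        show g i (a (σ' hex.choose).1) ∈ U i
        rw [heq]
        exact ha i
      · rw [not_not.mp hiT]; trivial
end

section
/- Let μ ≤ λ be infinite cardinals, X a topological space, and for each β < μ let Γ_β be a family of subsets of X with ∅ ∈ Γ_β, each admitting a 2^λ-universal set U_β ⊆ 2^λ × X (where 2^λ carries the bounded topology) such that the families Γ_β are closed under preimages of continuous maps 2^λ × X → 2^λ × X of the form g × id_X. Then the family (⋃_{β<μ} Γ_β)_{σ_μ} of unions of at most μ-many sets from ⋃_{β<μ} Γ_β also admits a 2^λ-universal set. -/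
open Ordinal Cardinal Set TopologicalSpace

noncomputable section UnivAux

variable (l : Cardinal.{0})

abbrev TT : Type := l.ord.ToType

instance instWO (o : Ordinal.{0}) : IsWellOrder o.ToType (· < ·) := isWellOrder_lt

/-- Gödel-style map into a lexicographic well-order. -/
def gmapU (p : TT l × TT l) : Lex (TT l × Lex (TT l × TT l)) :=
  toLex (max p.1 p.2, toLex (p.1, p.2))

lemma gmapU_inj : Function.Injective (gmapU l) := fun p q h => by
  have h1 : (max p.1 p.2, toLex (p.1, p.2)) = (max q.1 q.2, toLex (q.1, q.2)) :=
    toLex.injective h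
  have h2 : toLex (p.1, p.2) = toLex (q.1, q.2) := congrArg Prod.snd h1
  have h3 : (p.1, p.2) = (q.1, q.2) := toLex.injective h2
  exact h3

def gdl (p q : TT l × TT l) : Prop := gmapU l p < gmapU l q

def gdlEmb : (gdl l) ↪r ((· < ·) : Lex (TT l × Lex (TT l × TT l)) → _ → Prop) :=
  ⟨⟨gmapU l, gmapU_inj l⟩, Iff.rfl⟩

instance gdl_isWellOrder : IsWellOrder (TT l × TT l) (gdl l) :=
  @RelEmbedding.isWellOrder _ _ _ _ (gdlEmb l) isWellOrder_lt

lemma max_le_of_gdl {p q : TT l × TT l} (h : gdl l p q) :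
    max p.1 p.2 ≤ max q.1 q.2 := by
  rcases Prod.Lex.lt_iff.mp h with h' | ⟨h', _⟩
  · exact h'.le
  · exact h'.le

variable {l}

lemma mk_Iic_lt (hl : Cardinal.aleph0 ≤ l) (m : TT l) : #(Set.Iic m) < l := by
  have h0 : #{ y : TT l // y < m } =
      (typein ((· < ·) : TT l → TT l → Prop) m).card :=
    Ordinal.card_typein (r := ((· < ·) : TT l → TT l → Prop)) m
  have h1 : #(Set.Iio m) < l := by
    have h0' : #(Set.Iio m) = (typein ((· < ·) : TT l → TT l → Prop) m).card := h0
    rw [h0', ← Cardinal.lt_ord]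
    exact typein_lt_self m
  calc #(Set.Iic m) = #(insert m (Set.Iio m) : Set (TT l)) := by rw [Set.Iio_insert]
    _ ≤ #(Set.Iio m) + 1 := Cardinal.mk_insert_le
    _ < l := Cardinal.add_lt_of_lt hl h1 (lt_of_lt_of_le Cardinal.one_lt_aleph0 hl)

lemma typein_gdl_lt (hl : Cardinal.aleph0 ≤ l) (p : TT l × TT l) :
    typein (gdl l) p < l.ord := by
  rw [Cardinal.lt_ord, Ordinal.card_typein]
  set m := max p.1 p.2 with hm
  have hemb : Nonempty ({ y // gdl l y p } ↪ (Set.Iic m × Set.Iic m)) := by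
    refine ⟨⟨fun y => (⟨y.1.1, ?_⟩, ⟨y.1.2, ?_⟩), ?_⟩⟩
    · exact le_trans (le_max_left _ _) (max_le_of_gdl l y.2)
    · exact le_trans (le_max_right _ _) (max_le_of_gdl l y.2)
    · intro a b hab
      have h1 : a.1.1 = b.1.1 := congrArg Subtype.val (congrArg Prod.fst hab)
      have h2 : a.1.2 = b.1.2 := congrArg Subtype.val (congrArg Prod.snd hab)
      exact Subtype.ext (Prod.ext h1 h2)
  have h2 : #{ y // gdl l y p } ≤ #(Set.Iic m) * #(Set.Iic m) := by
    have := Cardinal.mk_le_of_injective hemb.some.injective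
    simpa [Cardinal.mk_prod] using this
  exact lt_of_le_of_lt h2 (Cardinal.mul_lt_of_lt hl (mk_Iic_lt hl m) (mk_Iic_lt hl m))

lemma typein_gdl_le {p : TT l × TT l} {M : TT l} (h1 : p.1 ≤ M) (h2 : p.2 ≤ M) :
    typein (gdl l) p ≤ typein (gdl l) (M, M) := by
  rw [Ordinal.typein_le_typein]
  intro h
  rcases Prod.Lex.lt_iff.mp h with h' | ⟨_, hlex⟩
  · exact absurd h' (not_lt.mpr (show max p.1 p.2 ≤ max M M by simpa using max_le h1 h2))
  · rcases Prod.Lex.lt_iff.mp hlex with h'' | ⟨_, h3⟩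
    · exact absurd h'' (not_lt.mpr h1)
    · exact absurd h3 (not_lt.mpr h2)

variable (l) in
def eltU (o : Ordinal.{0}) (h : o < l.ord) : TT l :=
  enum ((· < ·) : TT l → TT l → Prop) ⟨o, by rwa [type_toType]⟩

variable (l) in
def ordOf (t : TT l) : Ordinal.{0} := typein ((· < ·) : TT l → TT l → Prop) t

lemma ordOf_lt (t : TT l) : ordOf l t < l.ord := typein_lt_self t

lemma ordOf_eltU (o : Ordinal.{0}) (h : o < l.ord) : ordOf l (eltU l o h) = o :=
  typein_enum _ _

lemma eltU_ordOf (t : TT l) : eltU l (ordOf l t) (ordOf_lt t) = t :=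
  enum_typein _ t

lemma eltU_inj {o o' : Ordinal.{0}} {h : o < l.ord} {h' : o' < l.ord}
    (he : eltU l o h = eltU l o' h') : o = o' := by
  rw [← ordOf_eltU o h, ← ordOf_eltU o' h', he]

lemma eltU_lt_eltU {o o' : Ordinal.{0}} {h : o < l.ord} {h' : o' < l.ord}
    (ho : o < o') : eltU l o h < eltU l o' h' := by
  have := @enum_lt_enum (TT l) ((· < ·) : TT l → TT l → Prop) _
    ⟨o, by rwa [type_toType]⟩ ⟨o', by rwa [type_toType]⟩
  exact this.mpr (Subtype.mk_lt_mk.mpr ho)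

/-- Pair encoding `TT l × TT l → TT l`. -/
def pc (hl : Cardinal.aleph0 ≤ l) (p : TT l × TT l) : TT l :=
  eltU l (typein (gdl l) p) (typein_gdl_lt hl p)

lemma pc_inj (hl : Cardinal.aleph0 ≤ l) : Function.Injective (pc hl) := fun p q h =>
  typein_injective (gdl l) (eltU_inj h)

lemma pc_le (hl : Cardinal.aleph0 ≤ l) {p : TT l × TT l} {M : TT l}
    (h1 : p.1 ≤ M) (h2 : p.2 ≤ M) : pc hl p ≤ pc hl (M, M) := by
  rcases eq_or_lt_of_le (typein_gdl_le h1 h2) with h | h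
  · exact le_of_eq (by unfold pc; congr 1)
  · exact (eltU_lt_eltU h).le

lemma ordOf_le_ordOf {t t' : TT l} (h : t ≤ t') : ordOf l t ≤ ordOf l t' := by
  rw [ordOf, ordOf, Ordinal.typein_le_typein]
  exact not_lt.mpr h

-- continuing inside section UnivAux (paste before `end UnivAux`)

variable (μ : Cardinal.{0})

abbrev MT : Type := μ.ord.ToType

variable {μ} (hol : μ.ord ≤ l.ord)

def embT (d : MT μ) : TT l :=
  eltU l (typein ((· < ·) : MT μ → MT μ → Prop) d)
    (lt_of_lt_of_le (typein_lt_self d) hol)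

lemma embT_inj : Function.Injective (embT hol) := fun d d' h =>
  typein_injective _ (eltU_inj h)

variable (hl : Cardinal.aleph0 ≤ l)

def codeU (k : MT μ × MT μ) (t : TT l) : TT l :=
  pc hl (pc hl (embT hol k.1, embT hol k.2), t)

lemma codeU_inj {k k' : MT μ × MT μ} {t t' : TT l}
    (h : codeU hol hl k t = codeU hol hl k' t') : k = k' ∧ t = t' := by
  have h1 := pc_inj hl h
  have h2 : pc hl (embT hol k.1, embT hol k.2) = pc hl (embT hol k'.1, embT hol k'.2) :=
    congrArg Prod.fst h1
  have h3 := pc_inj hl h2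
  refine ⟨Prod.ext ?_ ?_, congrArg Prod.snd h1⟩
  · exact embT_inj hol (congrArg Prod.fst h3)
  · exact embT_inj hol (congrArg Prod.snd h3)

/-- The coordinate-selection map on branches. -/
def gmapB (k : MT μ × MT μ) (y : Branch Bool l.ord) : Branch Bool l.ord :=
  fun j hj => y (ordOf l (codeU hol hl k (eltU l j hj))) (ordOf_lt _)

lemma isOpen_cyl (s : BSeq Bool) (hs : s.len < l.ord) :
    IsOpen {x : Branch Bool l.ord | s.PrefixB x} :=
  TopologicalSpace.isOpen_generateFrom_of_mem
    (g := {U : Set (Branch Bool l.ord) | ∃ s : BSeq Bool, s.len < l.ord ∧ U = {x | s.PrefixB x}})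
    ⟨s, hs, rfl⟩

lemma continuous_gmapB (hl' : Cardinal.aleph0 ≤ l) (k : MT μ × MT μ) :
    Continuous (gmapB hol hl k) := by
  apply continuous_generateFrom_iff.mpr
  rintro U ⟨s, hslen, rfl⟩
  rw [isOpen_iff_forall_mem_open]
  intro y hy
  set M : TT l := max (pc hl (embT hol k.1, embT hol k.2)) (eltU l s.len hslen) with hM
  have hγlt : ordOf l (pc hl (M, M)) + 1 < l.ord :=
    (Ordinal.add_one_eq_succ _) ▸ (Cardinal.isSuccLimit_ord hl').succ_lt (ordOf_lt _)
  set γ : Ordinal.{0} := ordOf l (pc hl (M, M)) + 1 with hγ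
  have key : ∀ (m : Ordinal.{0}) (hm : m < s.len),
      ordOf l (codeU hol hl k (eltU l m (hm.trans hslen))) < γ := by
    intro m hm
    have h1 : codeU hol hl k (eltU l m (hm.trans hslen)) ≤ pc hl (M, M) := by
      apply pc_le hl
      · exact hM ▸ le_max_left _ _
      · exact le_trans (eltU_lt_eltU (h := hm.trans hslen) (h' := hslen) hm).le (hM ▸ le_max_right _ _)
    exact lt_of_le_of_lt (ordOf_le_ordOf h1) (lt_add_one _)
  refine ⟨{x | (y.restrict γ hγlt.le).PrefixB x}, ?_, isOpen_cyl _ hγlt, ⟨hγlt.le, fun β hβ => rfl⟩⟩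
  intro x hx
  obtain ⟨hle, hagree⟩ := hx
  obtain ⟨hle', hs⟩ := hy
  refine ⟨hle', fun m hm => ?_⟩
  have hidx := key m hm
  calc s.val m hm = gmapB hol hl k y m (lt_of_lt_of_le hm hle') := hs m hm
    _ = y (ordOf l (codeU hol hl k (eltU l m (hm.trans hslen)))) (ordOf_lt _) := rfl
    _ = x (ordOf l (codeU hol hl k (eltU l m (hm.trans hslen)))) _ := hagree _ hidx
    _ = gmapB hol hl k x m (lt_of_lt_of_le hm hle') := rfl

end UnivAux


/-- Construction of universal sets for `σ_μ`-unions: if for each `β < μ` the family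
`G β` of subsets of `X` contains `∅` and admits a `2^λ`-universal set `Ub β` lying in a
family `GC β` of subsets of `2^λ × X` closed under preimages along continuous maps of
the form `g × id_X`, then the family of unions of at most `μ`-many sets from
`⋃_{β<μ} G β` also admits a `2^λ`-universal set. -/
theorem universal_set_for_sigma_union (μ l : Cardinal.{0})
    (hμ : Cardinal.aleph0 ≤ μ) (hμl : μ ≤ l)
    {X : Type} [TopologicalSpace X]
    (G : Ordinal.{0} → Set (Set X))
    (GC : Ordinal.{0} → Set (Set (Branch Bool l.ord × X)))
    (Ub : Ordinal.{0} → Set (Branch Bool l.ord × X))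
    (hempty : ∀ β < μ.ord, ∅ ∈ G β)
    (hmem : ∀ β < μ.ord, Ub β ∈ GC β)
    (hsec : ∀ β < μ.ord,
      G β = {S : Set X | ∃ y : Branch Bool l.ord, S = {x : X | (y, x) ∈ Ub β}})
    (hclosure : ∀ β < μ.ord, ∀ A ∈ GC β,
      ∀ g : Branch Bool l.ord → Branch Bool l.ord, Continuous g →
        (fun p : Branch Bool l.ord × X => (g p.1, p.2)) ⁻¹' A ∈ GC β) :
    ∃ U : Set (Branch Bool l.ord × X),
      (∃ (ι : Type) (f : ι → Set (Branch Bool l.ord × X)), Cardinal.mk ι ≤ μ ∧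
        (∀ i, ∃ β < μ.ord, f i ∈ GC β) ∧ U = ⋃ i, f i) ∧
      {S : Set X | ∃ y : Branch Bool l.ord, S = {x : X | (y, x) ∈ U}} =
        {S : Set X | ∃ (ι : Type) (f : ι → Set X), Cardinal.mk ι ≤ μ ∧
          (∀ i, ∃ β < μ.ord, f i ∈ G β) ∧ S = ⋃ i, f i} := by
  classical
  have hl : Cardinal.aleph0 ≤ l := hμ.trans hμl
  have hol : μ.ord ≤ l.ord := Cardinal.ord_le_ord.mpr hμl
  let βof : MT μ × MT μ → Ordinal.{0} := fun k => ordOf μ k.2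
  have hβof : ∀ k : MT μ × MT μ, βof k < μ.ord := fun k => ordOf_lt _
  let gk : (MT μ × MT μ) → Branch Bool l.ord → Branch Bool l.ord := gmapB hol hl
  let Uk : (MT μ × MT μ) → Set (Branch Bool l.ord × X) :=
    fun k => (fun p : Branch Bool l.ord × X => (gk k p.1, p.2)) ⁻¹' Ub (βof k)
  have hmkK : Cardinal.mk (MT μ × MT μ) ≤ μ := by
    have h1 : Cardinal.mk (MT μ × MT μ) = Cardinal.mk (MT μ) * Cardinal.mk (MT μ) := by
      simp [Cardinal.mk_prod]
    rw [h1, Cardinal.mk_toType, Cardinal.card_ord, Cardinal.mul_eq_self hμ]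
  refine ⟨⋃ k, Uk k, ⟨MT μ × MT μ, Uk, hmkK, ?_, rfl⟩, ?_⟩
  · intro k
    exact ⟨βof k, hβof k,
      hclosure _ (hβof k) _ (hmem _ (hβof k)) (gk k) (continuous_gmapB hol hl hl k)⟩
  · ext S
    simp only [Set.mem_setOf_eq]
    constructor
    · rintro ⟨y, rfl⟩
      refine ⟨MT μ × MT μ, fun k => {x | (gk k y, x) ∈ Ub (βof k)}, hmkK, ?_, ?_⟩
      · intro k
        refine ⟨βof k, hβof k, ?_⟩
        rw [hsec _ (hβof k)]
        exact ⟨gk k y, rfl⟩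
      · ext x
        constructor
        · intro hx
          obtain ⟨k, hk⟩ := Set.mem_iUnion.mp (Set.mem_setOf_eq ▸ hx)
          exact Set.mem_iUnion.mpr ⟨k, hk⟩
        · intro hx
          obtain ⟨k, hk⟩ := Set.mem_iUnion.mp hx
          exact Set.mem_setOf_eq ▸ Set.mem_iUnion.mpr ⟨k, hk⟩
    · rintro ⟨ι, f, hι, hf, rfl⟩
      choose βi hβi hfG using hf
      have hyi0 : ∀ i, ∃ y : Branch Bool l.ord, f i = {x | (y, x) ∈ Ub (βi i)} := by
        intro i
        have h := hfG i
        rw [hsec _ (hβi i)] at h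
        exact h
      choose yi hyi using hyi0
      have hz0 : ∀ b : MT μ, ∃ zb : Branch Bool l.ord,
          (∅ : Set X) = {x | (zb, x) ∈ Ub (ordOf μ b)} := by
        intro b
        have h := hempty _ (ordOf_lt b)
        rw [hsec _ (ordOf_lt b)] at h
        exact h
      choose z hz using hz0
      have hmk : Cardinal.mk ι ≤ Cardinal.mk (MT μ) := by
        rw [Cardinal.mk_toType, Cardinal.card_ord]; exact hι
      obtain ⟨ρ⟩ := (Cardinal.le_def _ _).mp hmk
      let cond : MT μ × MT μ → Prop := fun k => ∃ i, ρ i = k.1 ∧ k.2 = eltU μ (βi i) (hβi i)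
      let P : MT μ × MT μ → Branch Bool l.ord := fun k =>
        if h : cond k then yi h.choose else z k.2
      have hPapp : ∀ (k₁ k₂ : MT μ × MT μ) (o₁ o₂ : Ordinal.{0})
          (h₁ : o₁ < l.ord) (h₂ : o₂ < l.ord), k₁ = k₂ → o₁ = o₂ →
          P k₁ o₁ h₁ = P k₂ o₂ h₂ := by
        rintro _ _ _ _ _ _ rfl rfl; rfl
      let y : Branch Bool l.ord := fun j hj =>
        if h : ∃ q : (MT μ × MT μ) × TT l, codeU hol hl q.1 q.2 = eltU l j hj
        then P h.choose.1 (ordOf l h.choose.2) (ordOf_lt _) else false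
      have hgky : ∀ k, gk k y = P k := by
        intro k
        funext m hm
        show y (ordOf l (codeU hol hl k (eltU l m hm))) (ordOf_lt _) = P k m hm
        have hex : ∃ q : (MT μ × MT μ) × TT l,
            codeU hol hl q.1 q.2 =
              eltU l (ordOf l (codeU hol hl k (eltU l m hm))) (ordOf_lt _) :=
          ⟨(k, eltU l m hm), (eltU_ordOf _).symm⟩
        have hspec := hex.choose_spec.trans (eltU_ordOf _)
        obtain ⟨hk, ht⟩ := codeU_inj hol hl hspec
        show (if h : ∃ q : (MT μ × MT μ) × TT l,
              codeU hol hl q.1 q.2 =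
                eltU l (ordOf l (codeU hol hl k (eltU l m hm))) (ordOf_lt _)
            then P h.choose.1 (ordOf l h.choose.2) (ordOf_lt _) else false)
            = P k m hm
        exact (dif_pos hex).trans (hPapp _ _ _ _ _ _ hk (by rw [ht, ordOf_eltU]))
      refine ⟨y, ?_⟩
      ext x
      constructor
      · intro hx
        obtain ⟨i, hxi⟩ := Set.mem_iUnion.mp hx
        have hcond : cond (ρ i, eltU μ (βi i) (hβi i)) := ⟨i, rfl, rfl⟩
        have hieq : hcond.choose = i := ρ.injective hcond.choose_spec.1
        show (y, x) ∈ ⋃ k, Uk k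
        apply Set.mem_iUnion.mpr
        refine ⟨(ρ i, eltU μ (βi i) (hβi i)), ?_⟩
        show (gk _ y, x) ∈ Ub (βof (ρ i, eltU μ (βi i) (hβi i)))
        rw [hgky]
        have hPk : P (ρ i, eltU μ (βi i) (hβi i)) = yi i := by
          show (if h : cond _ then yi h.choose else z _) = yi i
          rw [dif_pos hcond, hieq]
        have hβofk : βof (ρ i, eltU μ (βi i) (hβi i)) = βi i := ordOf_eltU (βi i) (hβi i)
        rw [hPk, hβofk]
        have h := hyi i
        rw [h] at hxi
        exact hxi
      · intro hx
        obtain ⟨k, hk⟩ := Set.mem_iUnion.mp (Set.mem_setOf_eq ▸ hx)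
        have hk' : (gk k y, x) ∈ Ub (βof k) := hk
        rw [hgky] at hk'
        by_cases h : cond k
        · obtain ⟨h1, h2⟩ := h.choose_spec
          have hP : P k = yi h.choose := dif_pos h
          have hβ : βof k = βi h.choose := by
            show ordOf μ k.2 = βi h.choose
            conv_lhs => rw [h2]
            exact ordOf_eltU _ _
          rw [hP, hβ] at hk'
          apply Set.mem_iUnion.mpr
          refine ⟨h.choose, ?_⟩
          rw [hyi h.choose]
          exact hk'
        · have hP : P k = z k.2 := dif_neg h
          rw [hP] at hk'
          exact absurd (show x ∈ (∅ : Set X) by rw [hz k.2]; exact hk')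
            (Set.notMem_empty x)
end

section
/- Let λ be an infinite cardinal and X a topological space of weight at most λ. Then there exists a 2^λ-universal open set: an open subset U of 2^λ × X (with 2^λ carrying the bounded topology and the product the product topology) such that the open subsets of X are exactly the vertical sections U_y = {x ∈ X | (y,x) ∈ U} for y ∈ 2^λ. -/
/-- For `X` of weight at most `λ`, there is a `2^λ`-universal open set: an open
`U ⊆ 2^λ × X` whose vertical sections are exactly the open subsets of `X`. -/
theorem universal_open_set (l : Cardinal.{0}) (hl : Cardinal.aleph0 ≤ l)
    {X : Type} [TopologicalSpace X]
    (B : Set (Set X)) (hB : TopologicalSpace.IsTopologicalBasis B)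
    (hBcard : Cardinal.mk B ≤ l) :
    ∃ U : Set (Branch Bool l.ord × X), IsOpen U ∧
      {V : Set X | IsOpen V} =
        {V : Set X | ∃ y : Branch Bool l.ord, V = {x : X | (y, x) ∈ U}} := by
  classical
  have hlim : Order.IsSuccLimit l.ord := Cardinal.isSuccLimit_ord hl
  have h1 : Cardinal.lift.{1} (Cardinal.mk B) ≤
      Cardinal.lift.{0} (Cardinal.mk (Set.Iio l.ord)) := by
    rw [Ordinal.mk_Iio_ordinal, Cardinal.card_ord]
    simpa using Cardinal.lift_le.{1,0}.mpr hBcard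
  obtain ⟨f⟩ := Cardinal.lift_mk_le'.mp h1
  -- enumeration of (a superset of) the basis by ordinals < l.ord
  set e : Set.Iio l.ord → Set X :=
    fun β => if h : ∃ b : B, f b = β then ((Classical.choose h : B) : Set X) else ∅ with he
  have he_open : ∀ β, IsOpen (e β) := by
    intro β
    rw [he]
    by_cases h : ∃ b : B, f b = β
    · simp only [h, dif_pos]
      exact hB.isOpen (Classical.choose h).2
    · simp only [h, dif_neg, not_false_iff]
      exact isOpen_empty
  have he_surj : ∀ b ∈ B, ∃ β, e β = b := by
    intro b hb
    refine ⟨f ⟨b, hb⟩, ?_⟩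
    have h : ∃ b' : B, f b' = f ⟨b, hb⟩ := ⟨⟨b, hb⟩, rfl⟩
    have := f.injective (Classical.choose_spec h)
    rw [he]; simp only [h, dif_pos, this]
  -- the universal open set
  refine ⟨{p : Branch Bool l.ord × X | ∃ β : Set.Iio l.ord, p.1 β.1 β.2 = true ∧ p.2 ∈ e β},
    ?_, ?_⟩
  · -- openness
    rw [isOpen_iff_forall_mem_open]
    rintro ⟨y, x⟩ ⟨β, hy, hx⟩
    refine ⟨{q : Branch Bool l.ord × X | q.1 β.1 β.2 = true ∧ q.2 ∈ e β},
      fun q hq => ⟨β, hq.1, hq.2⟩, ?_, ⟨hy, hx⟩⟩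
    have hcyl : IsOpen {y' : Branch Bool l.ord | y' β.1 β.2 = true} := by
      rw [isOpen_iff_forall_mem_open]
      intro y' hy'
      have hsucc : Order.succ β.1 < l.ord := hlim.succ_lt β.2
      refine ⟨{x' | (Branch.restrict y' (Order.succ β.1) hsucc.le).PrefixB x'}, ?_, ?_, ?_⟩
      · rintro x' ⟨h', hx'⟩
        have := hx' β.1 (Order.lt_succ β.1)
        simp only [Branch.restrict] at this
        show x' β.1 β.2 = true
        rw [← this]; exact hy'
      · exact TopologicalSpace.isOpen_generateFrom_of_mem
          ⟨Branch.restrict y' (Order.succ β.1) hsucc.le, hsucc, rfl⟩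
      · exact ⟨hsucc.le, fun γ hγ => rfl⟩
    have : {q : Branch Bool l.ord × X | q.1 β.1 β.2 = true ∧ q.2 ∈ e β} =
        {y' : Branch Bool l.ord | y' β.1 β.2 = true} ×ˢ e β := rfl
    rw [this]
    exact hcyl.prod (he_open β)
  · -- sections are exactly the open sets
    ext V
    simp only [Set.mem_setOf_eq]
    constructor
    · intro hV
      refine ⟨fun β hβ => decide (e ⟨β, hβ⟩ ⊆ V), ?_⟩
      ext x
      simp only [Set.mem_setOf_eq, decide_eq_true_eq]
      constructor
      · intro hx
        obtain ⟨b, hb, hxb, hbV⟩ := hB.exists_subset_of_mem_open hx hV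
        obtain ⟨β, hβ⟩ := he_surj b hb
        exact ⟨β, by rw [hβ]; exact hbV, by rw [hβ]; exact hxb⟩
      · rintro ⟨β, hβV, hxβ⟩
        exact hβV hxβ
    · rintro ⟨y, rfl⟩
      rw [isOpen_iff_forall_mem_open]
      rintro x ⟨β, hy, hx⟩
      exact ⟨e β, fun x' hx' => ⟨β, hy, hx'⟩, he_open β, hx⟩
end
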